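/- Let ν ∈ (0,1). There exists a constant C > 0 depending only on ν such that for every mesh 0 = t_0 < t_1 < ⋯ < t_N = T with steps τ_k = t_k − t_{k−1}, with A^{(n)}_{n−k} = (1/τ_k) ∫_{t_{k−1}}^{t_k} (t_n − s)^{−ν}/Γ(1−ν) ds and P^{(n)}_{n−j} the real numbers satisfying ∑_{j=k}^n P^{(n)}_{n−j} A^{(j)}_{j−k} = 1 for all 1 ≤ k ≤ n ≤ N, one has ∑_{j=1}^n P^{(n)}_{n−j} · t_j^{−ν}/Γ(1−ν) ≤ C for every 1 ≤ n ≤ N. -/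

import Mathlib

open MeasureTheory

/-- The L1 coefficients `A^{(n)}_{n-k} = (1/τ_k) ∫_{t_{k-1}}^{t_k} (t_n - s)^{-ν}/Γ(1-ν) ds`. -/
noncomputable def L1coeff (ν : ℝ) (t : ℕ → ℝ) (n k : ℕ) : ℝ :=
  (t k - t (k - 1))⁻¹ * ∫ s in (t (k - 1))..(t k), (t n - s) ^ (-ν) / Real.Gamma (1 - ν)

lemma aux_integrable {ν : ℝ} (a b c : ℝ) (hν : -1 < -ν) :
    IntervalIntegrable (fun s => (c - s) ^ (-ν)) volume a b := by
  have h := (intervalIntegral.intervalIntegrable_rpow' (a := c - a) (b := c - b) hν).comp_sub_left c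
  simpa using h

lemma aux_lower {ν : ℝ} (hν0 : 0 < ν) (hν1 : ν < 1) {a b c : ℝ} (hab : a < b) (hbc : b ≤ c) :
    (b - a) * (c - a) ^ (-ν) ≤ ∫ s in a..b, (c - s) ^ (-ν) := by
  have hint : IntervalIntegrable (fun s => (c - s) ^ (-ν)) volume a b :=
    aux_integrable a b c (by linarith)
  have hconst : IntervalIntegrable (fun _ : ℝ => (c - a) ^ (-ν)) volume a b :=
    intervalIntegrable_const
  have hne : ∀ᵐ s : ℝ, s ≠ c := by
    have h0 : (volume : Measure ℝ) {c} = 0 := Real.volume_singleton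
    filter_upwards [measure_eq_zero_iff_ae_notMem.mp h0] with x hx
    simpa using hx
  have hle : (fun _ : ℝ => (c - a) ^ (-ν)) ≤ᵐ[volume.restrict (Set.Icc a b)]
      fun s => (c - s) ^ (-ν) := by
    filter_upwards [ae_restrict_of_ae hne, ae_restrict_mem measurableSet_Icc] with s hsc hs
    have hsc' : s < c := lt_of_le_of_ne (le_trans hs.2 hbc) hsc
    exact Real.rpow_le_rpow_of_nonpos (by linarith) (by linarith [hs.1]) (by linarith)
  have h := intervalIntegral.integral_mono_ae_restrict (le_of_lt hab) hconst hint hle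
  simpa [smul_eq_mul] using h

lemma aux_upper {ν : ℝ} (hν0 : 0 < ν) (hν1 : ν < 1) {a b c : ℝ} (hab : a < b) (hbc : b < c) :
    (∫ s in a..b, (c - s) ^ (-ν)) ≤ (b - a) * (c - b) ^ (-ν) := by
  have hint : IntervalIntegrable (fun s => (c - s) ^ (-ν)) volume a b :=
    aux_integrable a b c (by linarith)
  have hconst : IntervalIntegrable (fun _ : ℝ => (c - b) ^ (-ν)) volume a b :=
    intervalIntegrable_const
  have hle : ∀ s ∈ Set.Icc a b, (c - s) ^ (-ν) ≤ (c - b) ^ (-ν) := by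
    intro s hs
    exact Real.rpow_le_rpow_of_nonpos (by linarith) (by linarith [hs.2]) (by linarith)
  have h := intervalIntegral.integral_mono_on (le_of_lt hab) hint hconst hle
  simpa [smul_eq_mul] using h

/-- Uniform bound `∑_{j=1}^n P^{(n)}_{n-j} ω_{1-ν}(t_j) ≤ C`, with `C = C(ν)` independent
of the mesh, where `ω_{1-ν}(t) = t^{-ν}/Γ(1-ν)` and `P n j` denotes `P^{(n)}_{n-j}`,
the complementary convolution kernels of the L1 coefficients. -/
theorem complementary_kernel_omega_sum_bound (ν : ℝ) (hν : ν ∈ Set.Ioo (0 : ℝ) 1) :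
    ∃ C > 0, ∀ (N : ℕ), 0 < N → ∀ (T : ℝ), 0 < T →
      ∀ t : ℕ → ℝ, t 0 = 0 → t N = T → (∀ k < N, t k < t (k + 1)) →
      ∀ P : ℕ → ℕ → ℝ,
        (∀ n k, 1 ≤ k → k ≤ n → n ≤ N →
          ∑ j ∈ Finset.Icc k n, P n j * L1coeff ν t j k = 1) →
        ∀ n, 1 ≤ n → n ≤ N →
          ∑ j ∈ Finset.Icc 1 n, P n j * ((t j) ^ (-ν) / Real.Gamma (1 - ν)) ≤ C := by
  obtain ⟨hν0, hν1⟩ := hν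
  have hG : 0 < Real.Gamma (1 - ν) := Real.Gamma_pos_of_pos (by linarith)
  refine ⟨1, one_pos, ?_⟩
  intro N hN T hT t ht0 htN hstep P hsys n hn1 hnN
  set G := Real.Gamma (1 - ν) with hGdef
  -- strict monotonicity of the mesh
  have hs : ∀ j ≤ N, ∀ i < j, t i < t j := by
    intro j hj
    induction j with
    | zero => omega
    | succ m ih =>
      intro i hi
      have hm : t m < t (m + 1) := hstep m (by omega)
      rcases Nat.lt_succ_iff_lt_or_eq.mp hi with h | h
      · exact lt_trans (ih (by omega) i h) hm
      · subst h; exact hm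
  -- lower bound for L1coeff
  have lowA : ∀ j k, 1 ≤ k → k ≤ j → j ≤ N →
      (t j - t (k - 1)) ^ (-ν) / G ≤ L1coeff ν t j k := by
    intro j k hk1 hkj hjN
    have hk0 : t (k - 1) < t k := hs k (by omega) (k - 1) (by omega)
    have hkj' : t k ≤ t j := by
      rcases eq_or_lt_of_le hkj with h | h
      · subst h; exact le_rfl
      · exact le_of_lt (hs j hjN k h)
    have hτ : 0 < t k - t (k - 1) := by linarith
    have hI := aux_lower hν0 hν1 hk0 hkj'
    rw [L1coeff, intervalIntegral.integral_div]
    have h2 : (t j - t (k - 1)) ^ (-ν) ≤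
        (t k - t (k - 1))⁻¹ * ∫ s in (t (k - 1))..(t k), (t j - s) ^ (-ν) := by
      rw [inv_mul_eq_div, le_div_iff₀ hτ, mul_comm]
      exact hI
    calc (t j - t (k - 1)) ^ (-ν) / G
        ≤ ((t k - t (k - 1))⁻¹ * ∫ s in (t (k - 1))..(t k), (t j - s) ^ (-ν)) / G := by
          gcongr
      _ = (t k - t (k - 1))⁻¹ * ((∫ s in (t (k - 1))..(t k), (t j - s) ^ (-ν)) / G) := by
          ring
  -- upper bound for L1coeff
  have uppA : ∀ j k, 1 ≤ k → k < j → j ≤ N →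
      L1coeff ν t j k ≤ (t j - t k) ^ (-ν) / G := by
    intro j k hk1 hkj hjN
    have hk0 : t (k - 1) < t k := hs k (by omega) (k - 1) (by omega)
    have hkj' : t k < t j := hs j hjN k hkj
    have hτ : 0 < t k - t (k - 1) := by linarith
    have hI := aux_upper hν0 hν1 hk0 hkj'
    rw [L1coeff, intervalIntegral.integral_div]
    have h2 : (t k - t (k - 1))⁻¹ * (∫ s in (t (k - 1))..(t k), (t j - s) ^ (-ν))
        ≤ (t j - t k) ^ (-ν) := by
      rw [inv_mul_eq_div, div_le_iff₀ hτ, mul_comm]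
      exact hI
    calc (t k - t (k - 1))⁻¹ * ((∫ s in (t (k - 1))..(t k), (t j - s) ^ (-ν)) / G)
        = ((t k - t (k - 1))⁻¹ * ∫ s in (t (k - 1))..(t k), (t j - s) ^ (-ν)) / G := by ring
      _ ≤ (t j - t k) ^ (-ν) / G := by gcongr
  -- positivity of L1coeff
  have hApos : ∀ j k, 1 ≤ k → k ≤ j → j ≤ N → 0 < L1coeff ν t j k := by
    intro j k hk1 hkj hjN
    refine lt_of_lt_of_le ?_ (lowA j k hk1 hkj hjN)
    have h1 : t (k - 1) < t j := hs j hjN (k - 1) (by omega)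
    exact div_pos (Real.rpow_pos_of_pos (by linarith) _) hG
  -- monotonicity of L1coeff in k
  have hAmono : ∀ i k, 1 ≤ k → k + 1 ≤ i → i ≤ N →
      L1coeff ν t i k ≤ L1coeff ν t i (k + 1) := by
    intro i k hk1 hki hiN
    have h1 := uppA i k hk1 (by omega) hiN
    have h2 := lowA i (k + 1) (by omega) hki hiN
    have h2' : (t i - t k) ^ (-ν) / G ≤ L1coeff ν t i (k + 1) := by simpa using h2
    exact h1.trans h2'
  -- nonnegativity of P n j
  have hPnn : ∀ d j, 1 ≤ j → j ≤ n → n - j ≤ d → 0 ≤ P n j := by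
    intro d
    induction d with
    | zero =>
      intro j h1 h2 h3
      have hj : j = n := by omega
      subst hj
      have hE := hsys j j h1 le_rfl hnN
      rw [Finset.Icc_self, Finset.sum_singleton] at hE
      have hA := hApos j j h1 le_rfl hnN
      nlinarith
    | succ d ih =>
      intro j h1 h2 h3
      by_cases hcase : n - j ≤ d
      · exact ih j h1 h2 hcase
      have hjn : j < n := by omega
      have hE1 := hsys n j h1 (by omega) hnN
      have hE2 := hsys n (j + 1) (by omega) (by omega) hnN
      have hsplit : Finset.Icc j n = insert j (Finset.Icc (j + 1) n) := by
        ext i; simp only [Finset.mem_Icc, Finset.mem_insert]; omega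
      rw [hsplit, Finset.sum_insert (by simp only [Finset.mem_Icc]; omega)] at hE1
      have hkey : P n j * L1coeff ν t j j =
          ∑ i ∈ Finset.Icc (j + 1) n, P n i * (L1coeff ν t i (j + 1) - L1coeff ν t i j) := by
        have hd : ∑ i ∈ Finset.Icc (j + 1) n, P n i * (L1coeff ν t i (j + 1) - L1coeff ν t i j)
            = (∑ i ∈ Finset.Icc (j + 1) n, P n i * L1coeff ν t i (j + 1))
              - ∑ i ∈ Finset.Icc (j + 1) n, P n i * L1coeff ν t i j := by
          rw [← Finset.sum_sub_distrib]
          exact Finset.sum_congr rfl (fun i _ => by ring)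
        rw [hd, hE2]
        linarith
      have hnn : 0 ≤ P n j * L1coeff ν t j j := by
        rw [hkey]
        refine Finset.sum_nonneg ?_
        intro i hi
        rw [Finset.mem_Icc] at hi
        have hPi : 0 ≤ P n i := ih i (by omega) hi.2 (by omega)
        have hAi : 0 ≤ L1coeff ν t i (j + 1) - L1coeff ν t i j := by
          have := hAmono i j h1 hi.1 (by omega)
          linarith
        exact mul_nonneg hPi hAi
      have hA := hApos j j h1 le_rfl (by omega)
      nlinarith
  have hP : ∀ j, 1 ≤ j → j ≤ n → 0 ≤ P n j := fun j h1 h2 => hPnn (n - j) j h1 h2 le_rfl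
  have hfin := hsys n 1 le_rfl hn1 hnN
  calc ∑ j ∈ Finset.Icc 1 n, P n j * ((t j) ^ (-ν) / G)
      ≤ ∑ j ∈ Finset.Icc 1 n, P n j * L1coeff ν t j 1 := by
        refine Finset.sum_le_sum ?_
        intro j hj
        rw [Finset.mem_Icc] at hj
        have hlow := lowA j 1 le_rfl hj.1 (le_trans hj.2 hnN)
        have hlow' : (t j) ^ (-ν) / G ≤ L1coeff ν t j 1 := by
          simpa [ht0] using hlow
        exact mul_le_mul_of_nonneg_left hlow' (hP j hj.1 hj.2)
    _ = 1 := hfin
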